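/- Setting K = 0 in the generalized Wick theorem: the ordinary product of polynomials is recovered from the star product by f₁(x₁)⋯f_d(x_d) = Σ_{k≥0} ((−ℏ)^k/k!) Σ_{deg M = 2k} (k choose m₁₂,…,m_{d−1,d}) [f₁^{(α₁)}(x₁) ⋆_{K′} ⋯ ⋆_{K′} f_d^{(α_d)}(x_d)] · Π_{i<j} (K′_{ij})^{m_{ij}}. -/

import Mathlib

/- Statement 11 -/

open MvPolynomial

noncomputable section

variable {R : Type} [CommRing R] [Algebra ℚ R]

/-- the finset of pairs `i < j`. -/
def pairs (d : ℕ) : Finset (Fin d × Fin d) :=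
  Finset.univ.filter (fun p : Fin d × Fin d => p.1 < p.2)

/-- the operator `Σ_{i<j} K_{ij} ∂_i ∂_j`. -/
def Lop {d : ℕ} (K : Fin d → Fin d → R) :
    Module.End R (MvPolynomial (Fin d) R) :=
  ∑ p ∈ pairs d, K p.1 p.2 • ((pderiv p.1).toLinearMap ∘ₗ (pderiv p.2).toLinearMap)

/-- the row sums `α_i = Σ_j m_{ij}`. -/
def rowSum {d : ℕ} (M : Fin d × Fin d → ℕ) (i : Fin d) : ℕ :=
  ∑ j : Fin d, (if i < j then M (i, j) else if j < i then M (j, i) else 0)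

/-- `f₁(x₁) ⋆_K ⋯ ⋆_K f_d(x_d) = exp{ℏ Σ_{i<j} K_{ij} ∂_i∂_j}(f₁(x₁)⋯f_d(x_d))`. -/
def multiStar {d : ℕ} (ℏ : R) (K : Fin d → Fin d → R)
    (f : Fin d → Polynomial R) : MvPolynomial (Fin d) R :=
  finsum fun n : ℕ =>
    (n.factorial : ℚ)⁻¹ •
      (ℏ ^ n • ((Lop K ^ n) (∏ i : Fin d, Polynomial.aeval (X i) (f i))))

namespace Statement11

variable {d : ℕ}

/-- product of single-variable polynomials -/
def PP (g : Fin d → Polynomial R) : MvPolynomial (Fin d) R :=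
  ∏ i : Fin d, Polynomial.aeval (X i) (g i)

/-- `∂_{p.1} ∘ ∂_{p.2}` as an endomorphism. -/
def Dp (p : Fin d × Fin d) : Module.End R (MvPolynomial (Fin d) R) :=
  (pderiv p.1).toLinearMap ∘ₗ (pderiv p.2).toLinearMap

lemma pderiv_aeval_X (i j : Fin d) (q : Polynomial R) :
    pderiv i (Polynomial.aeval (X j : MvPolynomial (Fin d) R) q) =
      if i = j then Polynomial.aeval (X j : MvPolynomial (Fin d) R) (Polynomial.derivative q)
      else 0 := by
  induction q using Polynomial.induction_on' with
  | add p q hp hq => simp only [map_add, hp, hq]; split <;> simp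
  | monomial n a =>
    rcases eq_or_ne i j with rfl | h
    · simp [Polynomial.aeval_monomial, pderiv_C_mul, pderiv_pow, algebraMap_eq,
        Polynomial.derivative_monomial, mul_comm, mul_assoc, mul_left_comm]
    · simp [Polynomial.aeval_monomial, pderiv_C_mul, pderiv_pow, algebraMap_eq,
        pderiv_X_of_ne (Ne.symm h), h]

lemma pderiv_prod_of_not_mem (g : Fin d → Polynomial R) (i : Fin d) (s : Finset (Fin d))
    (hi : i ∉ s) :
    pderiv i (∏ j ∈ s, Polynomial.aeval (X j : MvPolynomial (Fin d) R) (g j)) = 0 := by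
  induction s using Finset.induction_on with
  | empty => simp
  | insert a s ha ih =>
    rw [Finset.prod_insert ha, pderiv_mul, pderiv_aeval_X,
      if_neg (by rintro rfl; exact hi (Finset.mem_insert_self _ _)),
      ih (fun h => hi (Finset.mem_insert_of_mem h))]
    simp

lemma pderiv_PP (g : Fin d → Polynomial R) (i : Fin d) :
    pderiv i (PP g) = PP (fun j => if j = i then Polynomial.derivative (g j) else g j) := by
  unfold PP
  rw [← Finset.mul_prod_erase Finset.univ _ (Finset.mem_univ i), pderiv_mul,
    pderiv_prod_of_not_mem g i _ (Finset.notMem_erase i _), mul_zero, add_zero,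
    pderiv_aeval_X, if_pos rfl,
    ← Finset.mul_prod_erase Finset.univ
      (fun j => Polynomial.aeval (X j : MvPolynomial (Fin d) R)
        (if j = i then Polynomial.derivative (g j) else g j)) (Finset.mem_univ i)]
  rw [if_pos rfl]
  congr 1
  refine Finset.prod_congr rfl fun j hj => ?_
  rw [if_neg (Finset.ne_of_mem_erase hj)]

lemma pderiv_comm' (i j : Fin d) (Q : MvPolynomial (Fin d) R) :
    pderiv i (pderiv j Q) = pderiv j (pderiv i Q) := by
  induction Q using MvPolynomial.induction_on' with
  | add p q hp hq => simp [hp, hq]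
  | monomial s a =>
    rcases eq_or_ne i j with rfl | h
    · rfl
    · simp only [pderiv_monomial]
      rw [tsub_tsub, tsub_tsub, add_comm (Finsupp.single j 1)]
      congr 1
      rw [Finsupp.tsub_apply, Finsupp.tsub_apply, Finsupp.single_eq_of_ne h,
        Finsupp.single_eq_of_ne (Ne.symm h)]
      simp only [Nat.sub_zero]
      ring

lemma commute_pderiv (i j : Fin d) :
    Commute ((pderiv i).toLinearMap : Module.End R (MvPolynomial (Fin d) R))
      (pderiv j).toLinearMap :=
  LinearMap.ext fun Q => pderiv_comm' i j Q

lemma commute_Dp (p q : Fin d × Fin d) :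
    Commute (Dp p : Module.End R (MvPolynomial (Fin d) R)) (Dp q) := by
  have h : ∀ a b : Fin d, Commute
      ((pderiv a).toLinearMap : Module.End R (MvPolynomial (Fin d) R))
      (pderiv b).toLinearMap := commute_pderiv
  have h1 : (Dp p : Module.End R (MvPolynomial (Fin d) R))
      = (pderiv p.1).toLinearMap * (pderiv p.2).toLinearMap := rfl
  have h2 : (Dp q : Module.End R (MvPolynomial (Fin d) R))
      = (pderiv q.1).toLinearMap * (pderiv q.2).toLinearMap := rfl
  rw [h1, h2]
  exact ((h p.1 q.1).mul_right (h p.1 q.2)).mul_left ((h p.2 q.1).mul_right (h p.2 q.2))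

lemma commute_smul_Dp (a b : R) (p q : Fin d × Fin d) :
    Commute (a • Dp p : Module.End R (MvPolynomial (Fin d) R)) (b • Dp q) := by
  unfold Commute SemiconjBy
  rw [smul_mul_assoc, mul_smul_comm, smul_mul_assoc, mul_smul_comm,
    (commute_Dp p q).eq, smul_comm]

/-- contribution of pair `p` with multiplicity `m` to the derivative count at `i`. -/
def cnt (p : Fin d × Fin d) (m : ℕ) (i : Fin d) : ℕ :=
  (if i = p.1 then m else 0) + (if i = p.2 then m else 0)

lemma iter_der_succ (q : Polynomial R) (n : ℕ) :
    Polynomial.derivative^[n] (Polynomial.derivative q) = Polynomial.derivative^[n + 1] q :=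
  (Function.iterate_succ_apply _ _ _).symm

lemma Dp_pow_apply (p : Fin d × Fin d) (m : ℕ) (g : Fin d → Polynomial R) :
    ((Dp p ^ m : Module.End R (MvPolynomial (Fin d) R))) (PP g) =
      PP (fun i => Polynomial.derivative^[cnt p m i] (g i)) := by
  induction m generalizing g with
  | zero => simp [cnt]
  | succ m ih =>
    rw [pow_succ, Module.End.mul_apply]
    have hD : (Dp p : Module.End R (MvPolynomial (Fin d) R)) (PP g)
        = pderiv p.1 (pderiv p.2 (PP g)) := rfl
    rw [hD, pderiv_PP, pderiv_PP, ih]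
    congr 1
    funext i
    have hone : ∀ (c : Prop) [Decidable c] (q : Polynomial R),
        (if c then Polynomial.derivative q else q)
          = Polynomial.derivative^[if c then 1 else 0] q := by
      intro c _ q; split_ifs <;> rfl
    rw [hone, hone, ← Function.iterate_add_apply, ← Function.iterate_add_apply]
    congr 1
    simp only [cnt]
    split_ifs <;> omega

/-- total derivative count at `i` from a finite set of pairs. -/
def degFun (s : Finset (Fin d × Fin d)) (M : Fin d × Fin d → ℕ) (i : Fin d) : ℕ :=
  ∑ p ∈ s, cnt p (M p) i

lemma noncommProd_Dp_apply (K : Fin d → Fin d → R) (s : Finset (Fin d × Fin d))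
    (M : Fin d × Fin d → ℕ) (g : Fin d → Polynomial R) (h) :
    (s.noncommProd (fun p => (K p.1 p.2 • Dp p) ^ M p) h) (PP g) =
      (∏ p ∈ s, K p.1 p.2 ^ M p) •
        PP (fun i => Polynomial.derivative^[degFun s M i] (g i)) := by
  classical
  induction s using Finset.induction_on with
  | empty => simp [degFun, PP]
  | insert a s ha ih =>
    rw [Finset.noncommProd_insert_of_notMem _ _ _ _ ha, Module.End.mul_apply, ih]
    rw [smul_pow, LinearMap.smul_apply, map_smul, Dp_pow_apply, Finset.prod_insert ha,
      smul_smul]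
    congr 1
    refine congrArg PP (funext fun i => ?_)
    rw [← Function.iterate_add_apply]
    congr 1
    rw [degFun, degFun, Finset.sum_insert ha]

lemma rowSum_eq_degFun (M : Fin d × Fin d → ℕ) (i : Fin d) :
    rowSum M i = degFun (pairs d) M i := by
  classical
  have hL : rowSum M i = (∑ j : Fin d, if i < j then M (i, j) else 0)
      + (∑ j : Fin d, if j < i then M (j, i) else 0) := by
    unfold rowSum
    rw [← Finset.sum_add_distrib]
    exact Finset.sum_congr rfl fun j _ => by split_ifs <;> omega
  have key : ∀ a b : Fin d, (if a < b then cnt (a, b) (M (a, b)) i else 0)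
      = (if i = a then (if a < b then M (a, b) else 0) else 0)
        + (if i = b then (if a < b then M (a, b) else 0) else 0) := by
    intro a b
    simp only [cnt]
    split_ifs <;> omega
  have e1 : (∑ a : Fin d, ∑ b : Fin d,
        ((if i = a then (if a < b then M (a, b) else 0) else 0))) =
      ∑ b : Fin d, if i < b then M (i, b) else 0 := by
    calc (∑ a : Fin d, ∑ b : Fin d, ((if i = a then (if a < b then M (a, b) else 0) else 0)))
        = ∑ a : Fin d, (if i = a then (∑ b : Fin d, if a < b then M (a, b) else 0) else 0) :=
          Finset.sum_congr rfl fun a _ => by split_ifs <;> simp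
      _ = ∑ b : Fin d, if i < b then M (i, b) else 0 := by
          rw [Finset.sum_ite_eq, if_pos (Finset.mem_univ i)]
  have e2 : (∑ a : Fin d, ∑ b : Fin d,
        ((if i = b then (if a < b then M (a, b) else 0) else 0))) =
      ∑ a : Fin d, if a < i then M (a, i) else 0 := by
    rw [Finset.sum_comm]
    calc (∑ b : Fin d, ∑ a : Fin d, ((if i = b then (if a < b then M (a, b) else 0) else 0)))
        = ∑ b : Fin d, (if i = b then (∑ a : Fin d, if a < b then M (a, b) else 0) else 0) :=
          Finset.sum_congr rfl fun b _ => by split_ifs <;> simp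
      _ = ∑ a : Fin d, if a < i then M (a, i) else 0 := by
          rw [Finset.sum_ite_eq, if_pos (Finset.mem_univ i)]
  have hR : degFun (pairs d) M i = (∑ b : Fin d, if i < b then M (i, b) else 0)
      + (∑ a : Fin d, if a < i then M (a, i) else 0) := by
    unfold degFun pairs
    rw [Finset.sum_filter, Fintype.sum_prod_type]
    simp only [key, Finset.sum_add_distrib]
    rw [e1, e2]
  rw [hL, hR]

lemma Lop_eq (K : Fin d → Fin d → R) :
    Lop K = ∑ p ∈ pairs d, K p.1 p.2 • Dp p := rfl

lemma Lpow_PP (K : Fin d → Fin d → R) (k : ℕ) (g : Fin d → Polynomial R) :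
    (Lop K ^ k) (PP g) =
      ∑ M ∈ Finset.piAntidiag (pairs d) k,
        Nat.multinomial (pairs d) M •
          ((∏ p ∈ pairs d, K p.1 p.2 ^ M p) •
            PP (fun i => Polynomial.derivative^[rowSum M i] (g i))) := by
  classical
  have hc : ((pairs d : Finset (Fin d × Fin d)) : Set (Fin d × Fin d)).Pairwise
      (Function.onFun Commute fun p => K p.1 p.2 • Dp p) :=
    fun p _ q _ _ => commute_smul_Dp _ _ p q
  rw [Lop_eq, Finset.sum_pow_eq_sum_piAntidiag_of_commute _ _ hc, LinearMap.sum_apply]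
  refine Finset.sum_congr rfl fun M hM => ?_
  rw [Module.End.mul_apply, Module.End.natCast_apply, noncommProd_Dp_apply]
  have : PP (fun i => Polynomial.derivative^[degFun (pairs d) M i] (g i))
      = PP (fun i => Polynomial.derivative^[rowSum M i] (g i)) :=
    congrArg PP (funext fun i => by rw [rowSum_eq_degFun])
  rw [this]

/-! ### Nilpotence -/

lemma pderiv_as_sum (i : Fin d) (Q : MvPolynomial (Fin d) R) :
    pderiv i Q = ∑ s ∈ Q.support,
      monomial (s - Finsupp.single i 1) (Q.coeff s * s i) := by
  conv_lhs => rw [Q.as_sum]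
  rw [map_sum]
  exact Finset.sum_congr rfl fun s _ => pderiv_monomial

lemma pderiv_eq_zero_of_deg0 (i : Fin d) (Q : MvPolynomial (Fin d) R)
    (h : Q.totalDegree = 0) : pderiv i Q = 0 := by
  rw [pderiv_as_sum]
  refine Finset.sum_eq_zero fun s hs => ?_
  rw [(totalDegree_eq_zero_iff _ Q).1 h s hs i, Nat.cast_zero, mul_zero, map_zero]

lemma totalDegree_pderiv_le (i : Fin d) (Q : MvPolynomial (Fin d) R) (n : ℕ)
    (h : Q.totalDegree ≤ n + 1) : (pderiv i Q).totalDegree ≤ n := by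
  rw [pderiv_as_sum]
  refine totalDegree_finsetSum_le fun s hs => ?_
  rcases Nat.eq_zero_or_pos (s i) with h0 | h0
  · rw [h0, Nat.cast_zero, mul_zero, map_zero, totalDegree_zero]; exact Nat.zero_le n
  refine (totalDegree_monomial_le _ _).trans ?_
  have hle : Finsupp.single i 1 ≤ s := by
    rw [Finsupp.single_le_iff]; exact h0
  have hsum : (s - Finsupp.single i 1).sum (fun _ e => e) + 1 = s.sum fun _ e => e := by
    have hh : (s - Finsupp.single i 1) + Finsupp.single i 1 = s := tsub_add_cancel_of_le hle
    calc (s - Finsupp.single i 1).sum (fun _ e => e) + 1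
        = (s - Finsupp.single i 1).sum (fun _ e => e)
          + (Finsupp.single i 1).sum (fun _ e => e) := by
          rw [Finsupp.sum_single_index]; rfl
      _ = ((s - Finsupp.single i 1) + Finsupp.single i 1).sum (fun _ e => e) := by
          rw [Finsupp.sum_add_index'] <;> intros <;> rfl
      _ = s.sum fun _ e => e := by rw [hh]
  have hst : s.sum (fun _ e => e) ≤ n + 1 := le_trans (le_totalDegree hs) h
  simp only [Function.id_def]
  omega

lemma totalDegree_pderiv_le' (i : Fin d) (Q : MvPolynomial (Fin d) R) :
    (pderiv i Q).totalDegree ≤ Q.totalDegree :=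
  totalDegree_pderiv_le i Q Q.totalDegree (Nat.le_succ _)

lemma Lop_pow_eq_zero (K : Fin d → Fin d → R) :
    ∀ (n : ℕ) (Q : MvPolynomial (Fin d) R), Q.totalDegree < n → (Lop K ^ n) Q = 0 := by
  intro n
  induction n with
  | zero => intro Q h; exact absurd h (Nat.not_lt_zero _)
  | succ n ih =>
    intro Q h
    rw [pow_succ, Module.End.mul_apply]
    have hLQ : (Lop K) Q = ∑ p ∈ pairs d, K p.1 p.2 • pderiv p.1 (pderiv p.2 Q) := by
      rw [Lop_eq, LinearMap.sum_apply]
      exact Finset.sum_congr rfl fun p _ => rfl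
    match n, h with
    | 0, h =>
      have h0 : Q.totalDegree = 0 := Nat.lt_one_iff.1 h
      rw [pow_zero, Module.End.one_apply, hLQ]
      refine Finset.sum_eq_zero fun p _ => ?_
      rw [pderiv_eq_zero_of_deg0 p.2 Q h0, map_zero, smul_zero]
    | (m+1), h =>
      refine ih _ ?_
      rw [hLQ]
      have : ((∑ p ∈ pairs d, K p.1 p.2 • pderiv p.1 (pderiv p.2 Q) :
          MvPolynomial (Fin d) R)).totalDegree ≤ m := by
        refine totalDegree_finsetSum_le fun p _ => ?_
        refine (totalDegree_smul_le _ _).trans ?_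
        refine totalDegree_pderiv_le _ _ _ ?_
        refine (totalDegree_pderiv_le _ _ (m + 1) ?_)
        omega
      omega

/-! ### Degree bounds -/

lemma totalDegree_aeval_X_le (i : Fin d) (q : Polynomial R) :
    (Polynomial.aeval (X i : MvPolynomial (Fin d) R) q).totalDegree ≤ q.natDegree := by
  rw [Polynomial.aeval_eq_sum_range]
  refine totalDegree_finsetSum_le fun n hn => ?_
  refine (totalDegree_smul_le _ _).trans ?_
  rw [X_pow_eq_monomial]
  refine (totalDegree_monomial_le _ _).trans ?_
  rw [Finsupp.sum_single_index]
  · exact Nat.lt_succ_iff.1 (Finset.mem_range.1 hn)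
  · rfl

lemma natDegree_iterate_derivative_le (q : Polynomial R) (c : ℕ) :
    (Polynomial.derivative^[c] q).natDegree ≤ q.natDegree := by
  induction c with
  | zero => simp
  | succ c ih =>
    rw [Function.iterate_succ_apply']
    exact le_trans (le_trans (Polynomial.natDegree_derivative_le _) (Nat.sub_le _ _)) ih

lemma totalDegree_PP_le (f : Fin d → Polynomial R) (c : Fin d → ℕ) :
    (PP (R := R) fun i => Polynomial.derivative^[c i] (f i)).totalDegree ≤
      ∑ i : Fin d, (f i).natDegree := by
  refine (totalDegree_finset_prod _ _).trans ?_
  refine Finset.sum_le_sum fun i _ => ?_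
  exact le_trans (totalDegree_aeval_X_le _ _) (natDegree_iterate_derivative_le _ _)

/-! ### finsum evaluation -/

lemma multiStar_eq_sum (ℏ : R) (K : Fin d → Fin d → R) (g : Fin d → Polynomial R) (N : ℕ)
    (h : (PP (R := R) g).totalDegree < N) :
    multiStar ℏ K g = ∑ n ∈ Finset.range N,
      (n.factorial : ℚ)⁻¹ • (ℏ ^ n • ((Lop K ^ n) (PP g))) := by
  refine finsum_eq_sum_of_support_subset _ fun n hn => ?_
  rw [Finset.coe_range, Set.mem_Iio]
  by_contra hc
  apply hn
  have : (Lop K ^ n) (PP g) = 0 := Lop_pow_eq_zero K n _ (lt_of_lt_of_le h (not_lt.1 hc))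
  show (n.factorial : ℚ)⁻¹ • (ℏ ^ n • ((Lop K ^ n) (PP g))) = 0
  rw [this, smul_zero, smul_zero]

/-! ### the scalar identity -/

lemma alt_sum (m : ℕ) :
    (∑ p ∈ Finset.HasAntidiagonal.antidiagonal m,
        ((-1 : ℚ) ^ p.1 * ((p.1.factorial : ℚ)⁻¹ * (p.2.factorial : ℚ)⁻¹))) =
      if m = 0 then 1 else 0 := by
  rw [Finset.Nat.sum_antidiagonal_eq_sum_range_succ_mk]
  have key : ∀ k ∈ Finset.range (m + 1),
      ((-1 : ℚ) ^ k * ((k.factorial : ℚ)⁻¹ * ((m - k).factorial : ℚ)⁻¹)) =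
        ((-1 : ℚ) ^ k * (m.choose k : ℚ)) * (m.factorial : ℚ)⁻¹ := by
    intro k hk
    have hkm : k ≤ m := Nat.lt_succ_iff.1 (Finset.mem_range.1 hk)
    have hfact : (m.choose k : ℚ) * (k.factorial : ℚ) * ((m - k).factorial : ℚ)
        = (m.factorial : ℚ) := by
      exact_mod_cast congrArg (Nat.cast (R := ℚ))
        (Nat.choose_mul_factorial_mul_factorial hkm)
    have hc0 : (m.choose k : ℚ) ≠ 0 := Nat.cast_ne_zero.2 (Nat.choose_pos hkm).ne'
    have h5 : (m.factorial : ℚ)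
        = ((k.factorial : ℚ) * ((m - k).factorial : ℚ)) * (m.choose k : ℚ) := by
      rw [← hfact]; ring
    have hcc : (m.choose k : ℚ) * (m.choose k : ℚ)⁻¹ = 1 := mul_inv_cancel₀ hc0
    rw [h5, mul_inv, mul_inv]
    linear_combination
      (-((-1 : ℚ) ^ k * ((k.factorial : ℚ))⁻¹ * (((m - k).factorial : ℚ))⁻¹)) * hcc
  rw [Finset.sum_congr rfl key, ← Finset.sum_mul]
  have := Int.alternating_sum_range_choose (n := m)
  have hcast : (∑ k ∈ Finset.range (m + 1), ((-1 : ℚ) ^ k * (m.choose k : ℚ)))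
      = ((if m = 0 then 1 else 0 : ℤ) : ℚ) := by
    rw [← this]
    push_cast
    rfl
  rw [hcast]
  rcases eq_or_ne m 0 with rfl | hm
  · norm_num
  · simp [hm]

/-! ### the double sum lemma -/

lemma double_sum {Mo : Type} [AddCommMonoid Mo] [Module ℚ Mo] (N : ℕ) (v : ℕ → Mo)
    (hv : ∀ m, N ≤ m → v m = 0) (c : ℕ → ℕ → ℚ) :
    (∑ k ∈ Finset.range N, ∑ n ∈ Finset.range N, c k n • v (k + n)) =
      ∑ m ∈ Finset.range N, (∑ p ∈ Finset.HasAntidiagonal.antidiagonal m, c p.1 p.2) • v m := by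
  classical
  have hdisj : (↑(Finset.range N) : Set ℕ).PairwiseDisjoint
      (fun m => (Finset.HasAntidiagonal.antidiagonal m : Finset (ℕ × ℕ))) := by
    intro a _ b _ hab
    refine Finset.disjoint_left.2 fun p hpa hpb => hab ?_
    rw [Finset.HasAntidiagonal.mem_antidiagonal] at hpa hpb
    omega
  have hrhs : (∑ m ∈ Finset.range N, (∑ p ∈ Finset.HasAntidiagonal.antidiagonal m, c p.1 p.2) • v m)
      = ∑ p ∈ (Finset.range N).biUnion (fun m => Finset.HasAntidiagonal.antidiagonal m),
          c p.1 p.2 • v (p.1 + p.2) := by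
    rw [Finset.sum_biUnion hdisj]
    refine Finset.sum_congr rfl fun m _ => ?_
    rw [Finset.sum_smul]
    refine Finset.sum_congr rfl fun p hp => ?_
    rw [Finset.HasAntidiagonal.mem_antidiagonal.1 hp]
  rw [hrhs, ← Finset.sum_product']
  refine (Finset.sum_subset ?_ ?_).symm
  · intro p hp
    rw [Finset.mem_biUnion] at hp
    obtain ⟨m, hm, hpm⟩ := hp
    rw [Finset.HasAntidiagonal.mem_antidiagonal] at hpm
    rw [Finset.mem_range] at hm
    rw [Finset.mem_product, Finset.mem_range, Finset.mem_range]
    omega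
  · intro p hp hnp
    have : N ≤ p.1 + p.2 := by
      by_contra hc
      exact hnp (Finset.mem_biUnion.2 ⟨p.1 + p.2, Finset.mem_range.2 (not_le.1 hc),
        Finset.HasAntidiagonal.mem_antidiagonal.2 rfl⟩)
    rw [hv _ this, smul_zero]

end Statement11

open Statement11

set_option maxHeartbeats 1000000 in
/-- recovering the ordinary product from the star product. -/
theorem ordinary_product_from_star {d : ℕ} (ℏ : R) (K' : Fin d → Fin d → R)
    (f : Fin d → Polynomial R) :
    (∏ i : Fin d, Polynomial.aeval (X i) (f i)) =
      finsum fun k : ℕ =>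
        (k.factorial : ℚ)⁻¹ •
          ((-ℏ) ^ k •
            ∑ M ∈ Finset.piAntidiag (pairs d) k,
              Nat.multinomial (pairs d) M •
                (multiStar ℏ K' (fun i => Polynomial.derivative^[rowSum M i] (f i)) *
                  ∏ p ∈ pairs d, C (K' p.1 p.2) ^ M p)) := by
  classical
  set N : ℕ := (∑ i : Fin d, (f i).natDegree) + 1 with hN
  have hdeg : ∀ c : Fin d → ℕ,
      (PP (R := R) fun i => Polynomial.derivative^[c i] (f i)).totalDegree < N :=
    fun c => Nat.lt_succ_of_le (totalDegree_PP_le f c)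
  have hPP0 : (∏ i : Fin d, Polynomial.aeval (X i) (f i)) = PP (R := R) f := rfl
  have hPPf : PP (R := R) f = PP (R := R) fun i => Polynomial.derivative^[(0 : ℕ)] (f i) := rfl
  -- the building blocks
  set W : ℕ → MvPolynomial (Fin d) R := fun m => (Lop K' ^ m) (PP f) with hW
  have hWzero : ∀ m, N ≤ m → W m = 0 := by
    intro m hm
    refine Lop_pow_eq_zero K' m _ ?_
    rw [hPPf]
    exact lt_of_lt_of_le (hdeg 0) hm
  -- step 1: rewrite the inner sum over M
  have claim1 : ∀ k : ℕ,
      (∑ M ∈ Finset.piAntidiag (pairs d) k,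
        Nat.multinomial (pairs d) M •
          (multiStar ℏ K' (fun i => Polynomial.derivative^[rowSum M i] (f i)) *
            ∏ p ∈ pairs d, C (K' p.1 p.2) ^ M p)) =
      ∑ n ∈ Finset.range N, (n.factorial : ℚ)⁻¹ • (ℏ ^ n • W (n + k)) := by
    intro k
    have hterm : ∀ M : Fin d × Fin d → ℕ,
        Nat.multinomial (pairs d) M •
          (multiStar ℏ K' (fun i => Polynomial.derivative^[rowSum M i] (f i)) *
            ∏ p ∈ pairs d, C (K' p.1 p.2) ^ M p) =
        ∑ n ∈ Finset.range N, (n.factorial : ℚ)⁻¹ •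
          (ℏ ^ n • ((Lop K' ^ n)
            (Nat.multinomial (pairs d) M •
              ((∏ p ∈ pairs d, K' p.1 p.2 ^ M p) •
                PP (fun i => Polynomial.derivative^[rowSum M i] (f i)))))) := by
      intro M
      have hms : multiStar ℏ K' (fun i => Polynomial.derivative^[rowSum M i] (f i)) =
          ∑ n ∈ Finset.range N, (n.factorial : ℚ)⁻¹ •
            (ℏ ^ n • ((Lop K' ^ n)
              (PP (fun i => Polynomial.derivative^[rowSum M i] (f i))))) :=
        multiStar_eq_sum ℏ K' _ N (hdeg _)
      have hCprod : (∏ p ∈ pairs d, (C (K' p.1 p.2) : MvPolynomial (Fin d) R) ^ M p)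
          = C (∏ p ∈ pairs d, K' p.1 p.2 ^ M p) := by
        rw [map_prod]
        exact Finset.prod_congr rfl fun p _ => by rw [map_pow]
      rw [hms, hCprod, Finset.sum_mul, Finset.smul_sum]
      refine Finset.sum_congr rfl fun n _ => ?_
      rw [smul_mul_assoc, smul_mul_assoc, mul_comm, ← smul_eq_C_mul, ← map_smul]
      rw [map_nsmul, smul_comm (ℏ ^ n) (Nat.multinomial (pairs d) M),
        smul_comm ((n.factorial : ℚ)⁻¹) (Nat.multinomial (pairs d) M)]
    rw [Finset.sum_congr rfl fun M _ => hterm M, Finset.sum_comm]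
    refine Finset.sum_congr rfl fun n _ => ?_
    rw [← Finset.smul_sum]
    congr 1
    rw [← Finset.smul_sum]
    congr 1
    rw [← map_sum, ← Lpow_PP K' k f]
    rw [← Module.End.mul_apply, ← pow_add]
  -- the outer finsum has support in range N
  have hbody : ∀ k : ℕ,
      ((k.factorial : ℚ)⁻¹ •
        ((-ℏ) ^ k •
          ∑ M ∈ Finset.piAntidiag (pairs d) k,
            Nat.multinomial (pairs d) M •
              (multiStar ℏ K' (fun i => Polynomial.derivative^[rowSum M i] (f i)) *
                ∏ p ∈ pairs d, C (K' p.1 p.2) ^ M p))) =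
      ∑ n ∈ Finset.range N,
        ((-1 : ℚ) ^ k * ((k.factorial : ℚ)⁻¹ * (n.factorial : ℚ)⁻¹)) • (ℏ ^ (k + n) • W (k + n)) := by
    intro k
    rw [claim1 k, Finset.smul_sum, Finset.smul_sum]
    refine Finset.sum_congr rfl fun n _ => ?_
    rw [smul_comm ((-ℏ) ^ k) ((n.factorial : ℚ)⁻¹), smul_smul ((-ℏ) ^ k) (ℏ ^ n), neg_pow,
      mul_assoc, ← pow_add]
    rw [show ((-1 : R) ^ k * ℏ ^ (k + n)) • W (n + k) = ((-1 : R) ^ k) • (ℏ ^ (k + n) • W (k + n))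
      from by rw [Nat.add_comm n k, ← smul_smul]]
    rw [show ((-1 : R) ^ k) = (algebraMap ℚ R) ((-1 : ℚ) ^ k) from by
      rw [map_pow, map_neg, map_one]]
    rw [algebraMap_smul, smul_smul, smul_smul]
    congr 1
    ring
  rw [hPP0]
  rw [finsum_eq_sum_of_support_subset _ (s := Finset.range N) ?side]
  case side =>
    intro k hk
    rw [Finset.coe_range, Set.mem_Iio]
    by_contra hc
    apply hk
    show ((k.factorial : ℚ)⁻¹ • _) = 0
    rw [hbody k]
    refine Finset.sum_eq_zero fun n _ => ?_
    rw [hWzero (k + n) (le_trans (not_lt.1 hc) (Nat.le_add_right k n)), smul_zero, smul_zero]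
  rw [Finset.sum_congr rfl fun k _ => hbody k]
  rw [double_sum N (fun m => ℏ ^ m • W m) (fun m hm => by show ℏ ^ m • W m = 0; rw [hWzero m hm, smul_zero])
    (fun k n => (-1 : ℚ) ^ k * ((k.factorial : ℚ)⁻¹ * (n.factorial : ℚ)⁻¹))]
  rw [Finset.sum_congr rfl fun m _ => by rw [alt_sum m]]
  rw [Finset.sum_congr rfl fun m (_ : m ∈ Finset.range N) =>
    (by split_ifs with h <;> simp [h] : ((if m = 0 then (1:ℚ) else 0) • (ℏ ^ m • W m))
      = if m = 0 then ℏ ^ m • W m else 0)]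
  rw [Finset.sum_ite_eq' (Finset.range N) 0 (fun m => ℏ ^ m • W m),
    if_pos (Finset.mem_range.2 (Nat.succ_pos _))]
  rw [pow_zero, one_smul]
  rfl

end
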